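/- Let (A,D) be a Γ-Cartan pair. Then for every normalizer n ∈ N(A,D), both n*n and nn* belong to D. -/

import Mathlib

/-- Let `(A,D)` be a `Γ`-Cartan pair.  Then for every normalizer `n ∈ N(A,D)`, both `n*n` and `nn*` belong to `D`. -/
theorem gamma_cartan_stmt7
    {A : Type*} [NormedRing A] [StarRing A] [CStarRing A] [NormedAlgebra ℂ A]
    [CompleteSpace A] [StarModule ℂ A] [PartialOrder A] [StarOrderedRing A]
    {Γ : Type*} [AddCommGroup Γ]
    -- `A` is topologically graded by `Γ` (with linearly independent graded subspaces):
    (Agr : Γ → Submodule ℂ A)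
    (hgr_closed : ∀ t, IsClosed (Agr t : Set A))
    (hgr_mul : ∀ s t : Γ, ∀ a ∈ Agr t, ∀ b ∈ Agr s, a * b ∈ Agr (t + s))
    (hgr_star : ∀ t : Γ, ∀ a ∈ Agr t, star a ∈ Agr (-t))
    (hgr_indep : iSupIndep Agr)
    (hgr_dense : Dense (↑(⨆ t, Agr t) : Set A))
    -- with a faithful conditional expectation `E0 = Φ₀` onto the degree-zero subspace `A₀`:
    (E0 : A →ₗ[ℂ] A)
    (hE0mem : ∀ a, E0 a ∈ Agr 0)
    (hE0fix : ∀ a ∈ Agr 0, E0 a = a)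
    (hE0t : ∀ t : Γ, t ≠ 0 → ∀ a ∈ Agr t, E0 a = 0)
    (hE0star : ∀ a, E0 (star a) = star (E0 a))
    (hE0contr : ∀ a, ‖E0 a‖ ≤ ‖a‖)
    (hE0pos : ∀ a : A, 0 ≤ a → 0 ≤ E0 a)
    (hE0bimod : ∀ a : A, ∀ b ∈ Agr 0, E0 (b * a) = b * E0 a ∧ E0 (a * b) = E0 a * b)
    (hE0faith : ∀ a : A, E0 (star a * a) = 0 → a = 0)
    -- `D` is a Cartan subalgebra of `A₀`: a closed abelian *-subalgebra,
    (D : StarSubalgebra ℂ A)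
    (hD0 : (D : Set A) ⊆ (Agr 0 : Set A))
    (hDclosed : IsClosed (D : Set A))
    (hDcomm : ∀ d ∈ D, ∀ e ∈ D, d * e = e * d)
    -- maximal abelian in `A₀`,
    (hDmasa : ∀ a ∈ Agr 0, (∀ d ∈ D, a * d = d * a) → a ∈ D)
    -- containing an approximate unit for `A₀`,
    (hDau : ∃ (ι : Type) (l : Filter ι) (e : ι → A), l.NeBot ∧
      (∀ i, e i ∈ D ∧ 0 ≤ e i ∧ ‖e i‖ ≤ 1) ∧
      ∀ a ∈ Agr 0, Filter.Tendsto (fun i => e i * a) l (nhds a) ∧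
        Filter.Tendsto (fun i => a * e i) l (nhds a))
    -- whose normalizers in `A₀` generate `A₀`,
    (hD0gen : ∀ a ∈ Agr 0, a ∈ closure (↑(Submodule.span ℂ
      {n : A | n ∈ Agr 0 ∧ ∀ d ∈ D, n * d * star n ∈ D ∧ star n * d * n ∈ D}) : Set A))
    -- with a faithful conditional expectation `ED = E` of `A₀` onto `D`:
    (ED : A →ₗ[ℂ] A)
    (hEDmem : ∀ a, ED a ∈ D)
    (hEDfix : ∀ d ∈ D, ED d = d)
    (hEDstar : ∀ a, ED (star a) = star (ED a))
    (hEDcontr : ∀ a, ‖ED a‖ ≤ ‖a‖)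
    (hEDpos : ∀ a : A, 0 ≤ a → 0 ≤ ED a)
    (hEDbimod : ∀ a : A, ∀ d ∈ D, ED (d * a) = d * ED a ∧ ED (a * d) = ED a * d)
    (hEDfaith : ∀ a ∈ Agr 0, ED (star a * a) = 0 → a = 0)
    -- and the normalizers `N(A,D)` of `D` in `A` densely span `A`:
    (hNdense : Dense (↑(Submodule.span ℂ
      {n : A | ∀ d ∈ D, n * d * star n ∈ D ∧ star n * d * n ∈ D}) : Set A))
    (n : A)
    (hn : ∀ d ∈ D, n * d * star n ∈ D ∧ star n * d * n ∈ D) :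
    star n * n ∈ D ∧ n * star n ∈ D := by
  obtain ⟨ι, l, e, hlne, he, happrox⟩ := hDau
  haveI := hlne
  -- each e i is selfadjoint
  have hesa : ∀ i, star (e i) = e i := fun i => (IsSelfAdjoint.of_nonneg (he i).2.1)
  -- Step 1: for homogeneous a, e i * a → a
  have key : ∀ (t : Γ) (a : A), a ∈ Agr t →
      Filter.Tendsto (fun i => e i * a) l (nhds a) := by
    intro t a ha
    set p := a * star a with hp
    have hpmem : p ∈ Agr 0 := by
      have := hgr_mul (-t) t a ha (star a) (hgr_star t a ha)
      simpa [add_neg_cancel] using this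
    obtain ⟨h1, h2⟩ := happrox p hpmem
    have h3 : Filter.Tendsto (fun i => e i * p * e i) l (nhds p) := by
      have hz : Filter.Tendsto (fun i => e i * p * e i - p * e i) l (nhds 0) := by
        have hbd : ∀ i, ‖e i * p * e i - p * e i‖ ≤ ‖e i * p - p‖ := by
          intro i
          have hrw : e i * p * e i - p * e i = (e i * p - p) * e i :=
            (sub_mul _ _ _).symm
          rw [hrw]
          calc ‖(e i * p - p) * e i‖ ≤ ‖e i * p - p‖ * ‖e i‖ := norm_mul_le _ _
            _ ≤ ‖e i * p - p‖ * 1 :=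
                mul_le_mul_of_nonneg_left (he i).2.2 (norm_nonneg _)
            _ = ‖e i * p - p‖ := mul_one _
        have hlim : Filter.Tendsto (fun i => ‖e i * p - p‖) l (nhds 0) := by
          have : Filter.Tendsto (fun i => e i * p - p) l (nhds (p - p)) :=
            h1.sub tendsto_const_nhds
          simpa using this.norm
        exact squeeze_zero_norm hbd hlim
      have : Filter.Tendsto (fun i => (e i * p * e i - p * e i) + p * e i) l
          (nhds (0 + p)) := hz.add h2
      simpa using this
    -- x i := e i * a - a ; show x i * star (x i) → 0
    have hxx : Filter.Tendsto
        (fun i => (e i * a - a) * star (e i * a - a)) l (nhds 0) := by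
      have heq : ∀ i, (e i * a - a) * star (e i * a - a)
          = e i * p * e i - e i * p - p * e i + p := by
        intro i
        simp only [star_sub, star_mul, hesa, hp]
        noncomm_ring
      have : Filter.Tendsto (fun i => e i * p * e i - e i * p - p * e i + p) l
          (nhds (p - p - p + p)) := ((h3.sub h1).sub h2).add tendsto_const_nhds
      simp only [heq]
      simpa using this
    have hnorm : Filter.Tendsto (fun i => ‖e i * a - a‖) l (nhds 0) := by
      have h4 : Filter.Tendsto (fun i => ‖(e i * a - a) * star (e i * a - a)‖) l
          (nhds 0) := by
        simpa using hxx.norm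
      have h5 : Filter.Tendsto (fun i => Real.sqrt ‖(e i * a - a) * star (e i * a - a)‖)
          l (nhds 0) := by
        simpa [Function.comp_def] using (Real.continuous_sqrt.tendsto _).comp h4
      convert h5 using 2 with i
      rw [CStarRing.norm_self_mul_star, Real.sqrt_mul_self (norm_nonneg _)]
    have : Filter.Tendsto (fun i => e i * a - a) l (nhds 0) :=
      tendsto_zero_iff_norm_tendsto_zero.mpr hnorm
    have := this.add (tendsto_const_nhds (x := a))
    simpa using this
  -- Step 2: extend to the span of homogeneous elements
  have key2 : ∀ a ∈ (⨆ t, Agr t : Submodule ℂ A),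
      Filter.Tendsto (fun i => e i * a) l (nhds a) := by
    intro a ha
    refine Submodule.iSup_induction (motive := fun a =>
      Filter.Tendsto (fun i => e i * a) l (nhds a)) Agr ha key ?_ ?_
    · simpa using (tendsto_const_nhds : Filter.Tendsto (fun _ : ι => (0 : A)) l _)
    · intro x y hx hy
      have := hx.add hy
      simpa [mul_add] using this
  -- Step 3: extend to all of A by density and the norm bound
  have key3 : ∀ a : A, Filter.Tendsto (fun i => e i * a) l (nhds a) := by
    intro a
    rw [Metric.tendsto_nhds]
    intro ε hε
    obtain ⟨b, hb, hab⟩ := Metric.mem_closure_iff.mp (hgr_dense a) (ε / 3)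
      (by linarith)
    have hbt := key2 b hb
    have hev : ∀ᶠ i in l, dist (e i * b) b < ε / 3 :=
      (Metric.tendsto_nhds.mp hbt) (ε / 3) (by linarith)
    filter_upwards [hev] with i hi
    have h1 : ‖e i * a - e i * b‖ ≤ ‖a - b‖ := by
      calc ‖e i * a - e i * b‖ = ‖e i * (a - b)‖ := by rw [mul_sub]
        _ ≤ ‖e i‖ * ‖a - b‖ := norm_mul_le _ _
        _ ≤ 1 * ‖a - b‖ := mul_le_mul_of_nonneg_right (he i).2.2 (norm_nonneg _)
        _ = ‖a - b‖ := one_mul _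
    have tri : dist (e i * a) a ≤ ‖e i * a - e i * b‖ + dist (e i * b) b + ‖b - a‖ := by
      calc dist (e i * a) a ≤ dist (e i * a) (e i * b) + dist (e i * b) b
            + dist b a := dist_triangle4 _ _ _ _
        _ = ‖e i * a - e i * b‖ + dist (e i * b) b + ‖b - a‖ := by
            rw [dist_eq_norm, dist_eq_norm, dist_eq_norm]
    have hab' : ‖a - b‖ < ε / 3 := by rwa [dist_eq_norm] at hab
    have hba' : ‖b - a‖ < ε / 3 := by rwa [norm_sub_rev]
    linarith [tri, h1]
  -- right version: a * e i → a
  have key4 : ∀ a : A, Filter.Tendsto (fun i => a * e i) l (nhds a) := by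
    intro a
    have h := (continuous_star.tendsto (star a)).comp (key3 (star a))
    have heq : (fun i => a * e i) = star ∘ (fun i => e i * star a) := by
      funext i
      simp only [Function.comp_apply, star_mul, star_star, hesa]
    rw [heq]
    simpa using h
  constructor
  · have hmem : ∀ i, star n * e i * n ∈ D := fun i => (hn (e i) (he i).1).2
    have htend : Filter.Tendsto (fun i => star n * e i * n) l (nhds (star n * n)) := by
      have := ((key3 n).const_mul (star n))
      simpa [mul_assoc] using this
    exact hDclosed.mem_of_tendsto htend (Filter.Eventually.of_forall hmem)
  · have hmem : ∀ i, n * e i * star n ∈ D := fun i => (hn (e i) (he i).1).1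
    have htend : Filter.Tendsto (fun i => n * e i * star n) l (nhds (n * star n)) :=
      (key4 n).mul_const (star n)
    exact hDclosed.mem_of_tendsto htend (Filter.Eventually.of_forall hmem)
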